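/- Let $\Omega=\mathbb{N}$ with $\mathcal{F}=2^{\mathbb{N}}$, $\mathbb{P}(\{n\})=2^{-n}$, and for each $n$ define $P_n(\{1\})=1-1/n$, $P_n(\{n\})=1/n$, $P_n(\{k\})=0$ otherwise. Then the family $\{dP_n/d\mathbb{P}\}_{n\in\mathbb{N}}$ is uniformly integrable in $L^1(\mathbb{P})$, and for $W(n)=n$ one has $\sup_n E_{P_n}[W]=2$ but $\sup_n E_{P_n}[W1_{\{W\ge N\}}]=1$ for every $N\ge 2$; in particular, $W\in L^1(\mathcal{P})\setminus L^1_u(\mathcal{P})$ for $\mathcal{P}=\{P_n\}$. -/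

import Mathlib

open MeasureTheory ENNReal

/-- The reference measure `ℙ` on `ℕ` with `ℙ({n}) = 2^{-n}` for `n ≥ 1`. -/
noncomputable def Pref : Measure ℕ :=
  Measure.sum (fun n : ℕ => ((2 : ℝ≥0∞) ^ (n + 1))⁻¹ • Measure.dirac (n + 1))

/-- The measures `P_n` with `P_n({1}) = 1 - 1/n` and `P_n({n}) = 1/n`. -/
noncomputable def Pn (n : ℕ) : Measure ℕ :=
  (1 - (n : ℝ≥0∞)⁻¹) • Measure.dirac 1 + (n : ℝ≥0∞)⁻¹ • Measure.dirac n

/-- The density `dP_n/dℙ`. -/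
noncomputable def Dn (n : ℕ) (k : ℕ) : ℝ :=
  if k = n then 2 ^ n / n else if k = 1 then 2 * (1 - 1 / n) else 0

/-- The example: `{dP_n/dℙ}` is uniformly integrable, `sup_n E_{P_n}[W] = 2`
for `W(n) = n`, yet `sup_n E_{P_n}[W 1_{W ≥ N}] = 1` for all `N ≥ 2`; so `W`
lies in `L¹(𝒫) \ L¹_u(𝒫)`. -/
lemma withDensity_dirac (a : ℕ) (g : ℕ → ℝ≥0∞) :
    (Measure.dirac a).withDensity g = g a • Measure.dirac a := by
  classical
  ext s hs
  rw [withDensity_apply _ hs, setLIntegral_dirac, Measure.smul_apply,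
    Measure.dirac_apply' _ hs, smul_eq_mul]
  by_cases h : a ∈ s <;> simp [h]

lemma Pref_withDensity (g : ℕ → ℝ≥0∞) :
    Pref.withDensity g
      = Measure.sum (fun m => (((2:ℝ≥0∞)^(m+1))⁻¹ * g (m+1)) • Measure.dirac (m+1)) := by
  rw [Pref, withDensity_sum]
  congr 1
  funext m
  rw [withDensity_smul_measure, withDensity_dirac, smul_smul]

lemma coeff_eval (n : ℕ) (hn : 1 ≤ n) (m : ℕ) :
    ((2:ℝ≥0∞)^(m+1))⁻¹ * ENNReal.ofReal (Dn n (m+1))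
      = (if m = 0 then 1 - (n:ℝ≥0∞)⁻¹ else 0) + (if m + 1 = n then (n:ℝ≥0∞)⁻¹ else 0) := by
  have hn0 : (0:ℝ) < n := by exact_mod_cast hn
  have hinv : ENNReal.ofReal (1/(n:ℝ)) = ((n:ℝ≥0∞))⁻¹ := by
    rw [one_div, ENNReal.ofReal_inv_of_pos hn0, ENNReal.ofReal_natCast]
  have hpow : ENNReal.ofReal ((2:ℝ)^n) = (2:ℝ≥0∞)^n := by
    rw [ENNReal.ofReal_pow (by norm_num)]
    norm_num
  by_cases hmn : m + 1 = n
  · -- k = n case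
    have hDn : Dn n (m+1) = 2^n / n := by rw [Dn, if_pos hmn]
    rw [hDn]
    have : ENNReal.ofReal ((2:ℝ)^n / n) = (2:ℝ≥0∞)^n * ((n:ℝ≥0∞))⁻¹ := by
      rw [div_eq_mul_one_div, ENNReal.ofReal_mul (by positivity), hinv, hpow]
    rw [this, hmn, ← mul_assoc, ENNReal.inv_mul_cancel (by positivity) (by simp), one_mul]
    by_cases hm0 : m = 0
    · have : n = 1 := by omega
      simp [hm0, hmn, this]
    · simp [hm0, hmn]
  · by_cases hm0 : m = 0
    · have hn1 : ¬ ((1:ℕ) = n) := by omega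
      have hDn : Dn n (m+1) = 2 * (1 - 1/n) := by
        rw [Dn, hm0]
        simp [hn1]
      rw [hDn, ENNReal.ofReal_mul (by norm_num),
        ENNReal.ofReal_sub _ (by positivity), hinv, ENNReal.ofReal_one]
      rw [hm0, if_pos rfl, if_neg (by omega), add_zero, pow_one,
        ENNReal.ofReal_ofNat, ← mul_assoc,
        ENNReal.inv_mul_cancel (by norm_num) (by norm_num), one_mul]
    · have hDn : Dn n (m+1) = 0 := by
        rw [Dn, if_neg hmn, if_neg (by omega)]
      simp [hDn, hm0, hmn]


lemma part1 (n : ℕ) (hn : 1 ≤ n) :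
    Pn n = Pref.withDensity (fun k => ENNReal.ofReal (Dn n k)) := by
  rw [Pref_withDensity]
  ext s hs
  rw [Measure.sum_apply _ hs, Pn]
  simp only [Measure.smul_apply, smul_eq_mul, coeff_eval n hn, Measure.add_apply, add_mul]
  rw [Summable.tsum_add ENNReal.summable ENNReal.summable]
  have e1 : ∑' (i:ℕ), (if i = 0 then 1 - (n:ℝ≥0∞)⁻¹ else 0) * (Measure.dirac (i+1)) s
      = (1 - (n:ℝ≥0∞)⁻¹) * (Measure.dirac 1) s :=
    (tsum_eq_single 0 (by intro m hm; simp [hm])).trans (by norm_num)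
  have e2 : ∑' (i:ℕ), (if i + 1 = n then (n:ℝ≥0∞)⁻¹ else 0) * (Measure.dirac (i+1)) s
      = ((n:ℝ≥0∞))⁻¹ * (Measure.dirac n) s := by
    have e2' : ∀ (m : ℕ), m ≠ n - 1 →
        (if m + 1 = n then (n:ℝ≥0∞)⁻¹ else 0) * (Measure.dirac (m+1)) s = 0 := by
      intro m hm
      rw [if_neg (by omega), zero_mul]
    rw [tsum_eq_single (n-1) e2']
    have h2 : n - 1 + 1 = n := by omega
    simp [h2]
  rw [e1, e2]


lemma Pref_singleton (n : ℕ) (hn : 1 ≤ n) : Pref {n} = ((2:ℝ≥0∞)^n)⁻¹ := by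
  rw [Pref, Measure.sum_apply _ (measurableSet_singleton n)]
  have e : ∀ (m : ℕ), m ≠ n - 1 →
      (((2:ℝ≥0∞)^(m+1))⁻¹ • Measure.dirac (m+1)) {n} = 0 := by
    intro m hm
    have : m + 1 ≠ n := by omega
    simp [Measure.dirac_apply, this]
  rw [tsum_eq_single (n-1) e]
  have h2 : n - 1 + 1 = n := by omega
  simp [h2, Measure.dirac_apply]

lemma integral_indicator_singleton (μ : Measure ℕ) (a : ℕ) (f : ℕ → ℝ) :
    ∫ k, Set.indicator {a} f k ∂μ = (μ {a}).toReal * f a := by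
  rw [integral_indicator (measurableSet_singleton a), Measure.restrict_singleton,
    integral_smul_measure, integral_dirac, smul_eq_mul]


lemma part2 (ε : ℝ) (hε : 0 < ε) : ∃ C : ℝ, ∀ n : ℕ, 1 ≤ n →
    ∫ k, Set.indicator {k : ℕ | C ≤ Dn n k} (Dn n) k ∂Pref ≤ ε := by
  obtain ⟨M', hM'⟩ := exists_nat_one_div_lt hε
  set M := M' + 1 with hMdef
  have hMε : 1 / (M:ℝ) ≤ ε := by
    rw [hMdef]
    push_cast
    linarith [hM']
  refine ⟨(2:ℝ)^M + 3, fun n hn => ?_⟩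
  have hn0 : (0:ℝ) < n := by exact_mod_cast hn
  set C := (2:ℝ)^M + 3 with hC
  have hC2 : (2:ℝ) < C := by
    have : (0:ℝ) < 2^M := by positivity
    linarith
  have hsub : ∀ k : ℕ, k ≠ n → Dn n k < C := by
    intro k hk
    rw [Dn, if_neg hk]
    by_cases h1 : k = 1
    · rw [if_pos h1]
      have : 1/(n:ℝ) > 0 := by positivity
      nlinarith
    · rw [if_neg h1]; linarith
  by_cases hbig : C ≤ Dn n n
  · have hset : {k : ℕ | C ≤ Dn n k} = {n} := by
      ext k
      simp only [Set.mem_setOf_eq, Set.mem_singleton_iff]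
      constructor
      · intro h
        by_contra hk
        exact absurd h (not_le.mpr (hsub k hk))
      · rintro rfl; exact hbig
    rw [hset, integral_indicator_singleton, Pref_singleton n hn]
    have htr : (((2:ℝ≥0∞)^n)⁻¹).toReal = ((2:ℝ)^n)⁻¹ := by
      rw [ENNReal.toReal_inv]
      norm_num
    rw [htr, Dn, if_pos rfl]
    have hval : ((2:ℝ)^n)⁻¹ * (2^n / n) = 1/n := by
      field_simp
    rw [hval]
    -- now need 1/n ≤ ε using 2^M ≤ 2^n/n ≤ 2^n hence M ≤ n
    have h1 : (2:ℝ)^M ≤ 2^n := by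
      have : Dn n n ≤ (2:ℝ)^n := by
        rw [Dn, if_pos rfl]
        have : (1:ℝ) ≤ n := by exact_mod_cast hn
        calc (2:ℝ)^n / n ≤ 2^n / 1 := by
              apply div_le_div_of_nonneg_left (by positivity) (by norm_num) this
          _ = 2^n := by ring
      nlinarith [hbig]
    have hMn : M ≤ n := by
      by_contra hc
      push_neg at hc
      have : (2:ℝ)^n < 2^M := by
        apply pow_lt_pow_right₀ (by norm_num) hc
      linarith
    have : 1/(n:ℝ) ≤ 1/M := by
      apply one_div_le_one_div_of_le (by positivity)
      exact_mod_cast hMn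
    linarith
  · have hset : {k : ℕ | C ≤ Dn n k} = ∅ := by
      ext k
      simp only [Set.mem_setOf_eq, Set.mem_empty_iff_false, iff_false, not_le]
      by_cases hk : k = n
      · subst hk; exact not_le.mp hbig
      · exact hsub k hk
    rw [hset]
    simp only [Set.indicator_empty]
    rw [integral_zero]
    linarith


lemma integrable_smul_dirac (c : ℝ≥0∞) (hc : c ≠ ∞) (a : ℕ) (f : ℕ → ℝ) :
    Integrable f (c • Measure.dirac a) := by
  constructor
  · exact (measurable_from_nat (f := f)).aestronglyMeasurable
  · rw [HasFiniteIntegral, lintegral_smul_measure, lintegral_dirac]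
    exact ENNReal.mul_lt_top hc.lt_top (by simp)

lemma integral_smul_dirac (c : ℝ≥0∞) (a : ℕ) (f : ℕ → ℝ) :
    ∫ k, f k ∂(c • Measure.dirac a) = c.toReal * f a := by
  rw [integral_smul_measure, integral_dirac, smul_eq_mul]

lemma integral_Pn (n : ℕ) (hn : 1 ≤ n) (f : ℕ → ℝ) :
    ∫ k, f k ∂(Pn n) = (1 - 1/(n:ℝ)) * f 1 + (1/(n:ℝ)) * f n := by
  have h1 : (1 - (n : ℝ≥0∞)⁻¹) ≠ ∞ := (tsub_le_self.trans_lt one_lt_top).ne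
  have h2 : ((n : ℝ≥0∞))⁻¹ ≠ ∞ :=
    ENNReal.inv_ne_top.mpr (Nat.cast_ne_zero.mpr (by omega))
  rw [Pn, integral_add_measure (integrable_smul_dirac _ h1 _ _)
    (integrable_smul_dirac _ h2 _ _), integral_smul_dirac, integral_smul_dirac]
  have hnn : ((n:ℝ≥0∞))⁻¹ ≤ 1 := by
    rw [ENNReal.inv_le_one]
    exact_mod_cast Nat.one_le_cast.mpr hn
  rw [ENNReal.toReal_sub_of_le hnn one_ne_top]
  simp [one_div]


lemma part3 : (⨆ n : {n : ℕ // 1 ≤ n}, ∫ k, (k : ℝ) ∂(Pn n)) = 2 := by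
  have hval : ∀ n : ℕ, 1 ≤ n → ∫ k, (k : ℝ) ∂(Pn n) = 2 - 1/(n:ℝ) := by
    intro n hn
    rw [integral_Pn n hn]
    have hn0 : (n:ℝ) ≠ 0 := Nat.cast_ne_zero.mpr (by omega)
    field_simp
    ring
  have hbdd : BddAbove (Set.range fun n : {n : ℕ // 1 ≤ n} => ∫ k, (k : ℝ) ∂(Pn n)) := by
    refine ⟨2, ?_⟩
    rintro x ⟨⟨n, hn⟩, rfl⟩
    dsimp only
    rw [hval n hn]
    have : 0 < 1/(n:ℝ) := by positivity
    linarith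
  apply le_antisymm
  · apply ciSup_le
    rintro ⟨n, hn⟩
    dsimp only
    rw [hval n hn]
    have : 0 < 1/(n:ℝ) := by positivity
    linarith
  · apply _root_.le_of_forall_pos_le_add
    intro ε hε
    obtain ⟨m, hm⟩ := exists_nat_one_div_lt hε
    have hle := le_ciSup hbdd ⟨m + 1, by omega⟩
    rw [hval (m+1) (by omega)] at hle
    push_cast at hle hm ⊢
    linarith

lemma part4 (N : ℕ) (hN : 2 ≤ N) :
    (⨆ n : {n : ℕ // 1 ≤ n},
      ∫ k, Set.indicator {k : ℕ | N ≤ k} (fun k => (k : ℝ)) k ∂(Pn n)) = 1 := by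
  have hval : ∀ n : ℕ, 1 ≤ n →
      ∫ k, Set.indicator {k : ℕ | N ≤ k} (fun k => (k : ℝ)) k ∂(Pn n)
        = if N ≤ n then 1 else 0 := by
    intro n hn
    rw [integral_Pn n hn]
    have h1 : Set.indicator {k : ℕ | N ≤ k} (fun k => (k : ℝ)) 1 = 0 :=
      Set.indicator_of_notMem (by simp; omega) _
    rw [h1, mul_zero, zero_add]
    by_cases h : N ≤ n
    · rw [if_pos h, Set.indicator_of_mem (by simpa using h)]
      field_simp
    · rw [if_neg h, Set.indicator_of_notMem (by simpa using h), mul_zero]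
  have hbdd : BddAbove (Set.range fun n : {n : ℕ // 1 ≤ n} =>
      ∫ k, Set.indicator {k : ℕ | N ≤ k} (fun k => (k : ℝ)) k ∂(Pn n)) := by
    refine ⟨1, ?_⟩
    rintro x ⟨⟨n, hn⟩, rfl⟩
    dsimp only
    rw [hval n hn]
    split_ifs <;> norm_num
  apply le_antisymm
  · apply ciSup_le
    rintro ⟨n, hn⟩
    dsimp only
    rw [hval n hn]
    split_ifs <;> norm_num
  · have hle := le_ciSup hbdd ⟨N, by omega⟩
    rw [hval N (by omega), if_pos le_rfl] at hle
    exact hle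

lemma part5 : ¬ (∀ ε : ℝ, 0 < ε → ∃ N : ℝ, ∀ n : ℕ, 1 ≤ n →
    ∫ k, Set.indicator {k : ℕ | N ≤ (k : ℝ)} (fun k => (k : ℝ)) k ∂(Pn n) ≤ ε) := by
  intro h
  obtain ⟨N, hN⟩ := h (1/2) (by norm_num)
  set n : ℕ := max 1 ⌈N⌉₊ with hndef
  have hn1 : 1 ≤ n := le_max_left _ _
  have hNn : N ≤ (n : ℝ) := by
    calc N ≤ (⌈N⌉₊ : ℝ) := Nat.le_ceil N
      _ ≤ n := by exact_mod_cast le_max_right _ _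
  have := hN n hn1
  rw [integral_Pn n hn1] at this
  have hfn : Set.indicator {k : ℕ | N ≤ (k : ℝ)} (fun k => (k : ℝ)) n = n :=
    Set.indicator_of_mem (by simpa using hNn) _
  have hf1 : (0:ℝ) ≤ Set.indicator {k : ℕ | N ≤ (k : ℝ)} (fun k => (k : ℝ)) 1 :=
    Set.indicator_nonneg (fun k _ => by positivity) _
  have hn0 : (0:ℝ) < n := by exact_mod_cast hn1
  have hterm : (1/(n:ℝ)) * n = 1 := by field_simp
  have hcoef : (0:ℝ) ≤ 1 - 1/(n:ℝ) := by
    have : 1/(n:ℝ) ≤ 1 := by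
      rw [div_le_one hn0]
      exact_mod_cast hn1
    linarith
  rw [hfn] at this
  nlinarith [mul_nonneg hcoef hf1]

theorem counterexample_L1u :
    -- density identification
    (∀ n : ℕ, 1 ≤ n → Pn n = Pref.withDensity (fun k => ENNReal.ofReal (Dn n k))) ∧
    -- uniform integrability of the densities
    (∀ ε : ℝ, 0 < ε → ∃ C : ℝ, ∀ n : ℕ, 1 ≤ n →
      ∫ k, Set.indicator {k : ℕ | C ≤ Dn n k} (Dn n) k ∂Pref ≤ ε) ∧
    -- sup of expectations of W equals 2
    (⨆ n : {n : ℕ // 1 ≤ n}, ∫ k, (k : ℝ) ∂(Pn n)) = 2 ∧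
    -- tails do not vanish uniformly
    (∀ N : ℕ, 2 ≤ N →
      (⨆ n : {n : ℕ // 1 ≤ n},
        ∫ k, Set.indicator {k : ℕ | N ≤ k} (fun k => (k : ℝ)) k ∂(Pn n)) = 1) ∧
    -- W ∈ L¹(𝒫) \ L¹_u(𝒫)
    ¬ (∀ ε : ℝ, 0 < ε → ∃ N : ℝ, ∀ n : ℕ, 1 ≤ n →
      ∫ k, Set.indicator {k : ℕ | N ≤ (k : ℝ)} (fun k => (k : ℝ)) k ∂(Pn n) ≤ ε) :=
  ⟨part1, part2, part3, part4, part5⟩
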